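/- If the tent map T is long-branched (i.e. inf_n |D_n| > 0), then every proper subcontinuum of the core inverse limit space X′ is a point or an arc. -/

import Mathlib

open Set Filter Topology

/-- The inverse limit `lim←(K, T)`, as the space of backward orbits. -/
abbrev InvLim (T : ℝ → ℝ) (K : Set ℝ) :=
  {x : ℕ → ℝ // (∀ n, x n ∈ K) ∧ ∀ n, T (x (n + 1)) = x n}

/-- A subset of a topological space is an arc if it is the image of `[0,1]` under a
topological embedding. -/
def IsArc {Z : Type*} [TopologicalSpace Z] (A : Set Z) : Prop :=
  ∃ f : Set.Icc (0:ℝ) 1 → Z, Topology.IsEmbedding f ∧ Set.range f = A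

set_option maxHeartbeats 1000000

lemma point_or_arc {Z : Type*} [TopologicalSpace Z] [T2Space Z] {H : Set Z}
    (hcomp : IsCompact H) (hconn : IsConnected H) {φ : Z → ℝ} (hφ : Continuous φ)
    (hinj : ∀ h ∈ H, ∀ h' ∈ H, φ h = φ h' → h = h') :
    (∃ a, H = {a}) ∨ IsArc H := by
  have hne : H.Nonempty := hconn.nonempty
  have himg : φ '' H = Icc (sInf (φ '' H)) (sSup (φ '' H)) :=
    eq_Icc_of_connected_compact (hconn.image φ hφ.continuousOn) (hcomp.image hφ)
  set a := sInf (φ '' H)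
  set b := sSup (φ '' H)
  have hab : a ≤ b := by
    obtain ⟨h₀, hh₀⟩ := hne
    have : φ h₀ ∈ Icc a b := himg ▸ mem_image_of_mem φ hh₀
    exact le_trans this.1 this.2
  rcases eq_or_lt_of_le hab with heq | hlt
  · -- singleton
    left
    obtain ⟨h₀, hh₀⟩ := hne
    refine ⟨h₀, ?_⟩
    apply Subset.antisymm
    · intro h hh
      have h1 : φ h ∈ Icc a b := himg ▸ mem_image_of_mem φ hh
      have h2 : φ h₀ ∈ Icc a b := himg ▸ mem_image_of_mem φ hh₀
      have : φ h = φ h₀ := by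
        rw [← heq] at h1 h2
        have e1 : φ h = a := le_antisymm h1.2 h1.1
        have e2 : φ h₀ = a := le_antisymm h2.2 h2.1
        rw [e1, e2]
      exact (hinj h hh h₀ hh₀ this) ▸ rfl
    · intro h hh
      rw [mem_singleton_iff] at hh
      rw [hh]
      exact hh₀
  · -- arc
    right
    haveI : CompactSpace ↥H := isCompact_iff_compactSpace.mp hcomp
    have hmem : ∀ h : ↥H, φ (h : Z) ∈ Icc a b := fun h =>
      himg ▸ mem_image_of_mem φ h.2
    set e₀ : ↥H → ↥(Icc a b) := fun h => ⟨φ (h : Z), hmem h⟩ with he₀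
    have hbij : Function.Bijective e₀ := by
      constructor
      · intro h h' hhh
        have : φ (h : Z) = φ (h' : Z) := congrArg Subtype.val hhh
        exact Subtype.ext (hinj _ h.2 _ h'.2 this)
      · rintro ⟨x, hx⟩
        have : x ∈ φ '' H := himg ▸ hx
        obtain ⟨h, hh, rfl⟩ := this
        exact ⟨⟨h, hh⟩, rfl⟩
    have hcont : Continuous (Equiv.ofBijective e₀ hbij) := by
      apply Continuous.subtype_mk
      exact hφ.comp continuous_subtype_val
    have Φ : ↥H ≃ₜ ↥(Icc a b) := hcont.homeoOfEquivCompactToT2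
    have ψ : ↥(Icc a b) ≃ₜ ↥(Icc (0:ℝ) 1) := iccHomeoI a b hlt
    set g : ↥(Icc (0:ℝ) 1) ≃ₜ ↥H := (ψ.symm.trans Φ.symm) with hg
    refine ⟨fun t => ((g t : ↥H) : Z), ?_, ?_⟩
    · exact Topology.IsEmbedding.comp Topology.IsEmbedding.subtypeVal g.isEmbedding
    · have : (fun t => ((g t : ↥H) : Z)) = (Subtype.val : ↥H → Z) ∘ g := rfl
      rw [this, range_comp]
      have hsurj : range (⇑g) = univ := g.surjective.range_eq
      rw [hsurj, image_univ, Subtype.range_coe]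

namespace Stmt8

variable {s : ℝ} {T : ℝ → ℝ}

section Basic

variable (hs1 : Real.sqrt 2 < s) (hs2 : s ≤ 2)
  (hT : ∀ x, T x = min (s * x) (s * (1 - x)))

include hs1 in
lemma one_lt_s : 1 < s := by
  nlinarith [Real.sq_sqrt (show (0:ℝ) ≤ 2 by norm_num), Real.sqrt_nonneg 2]

include hs1 in
lemma two_lt_sq : 2 < s ^ 2 := by
  nlinarith [Real.sq_sqrt (show (0:ℝ) ≤ 2 by norm_num), Real.sqrt_nonneg 2]

include hs1 in
lemma s_pos : 0 < s := lt_trans one_pos (one_lt_s hs1)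

include hs1 hT in
lemma T_left {x : ℝ} (hx : x ≤ 1/2) : T x = s * x := by
  rw [hT]; exact min_eq_left (by nlinarith [s_pos hs1])

include hs1 hT in
lemma T_right {x : ℝ} (hx : 1/2 ≤ x) : T x = s * (1 - x) := by
  rw [hT]; exact min_eq_right (by nlinarith [s_pos hs1])

include hs1 hT in
lemma T_c : T (1/2) = s/2 := by rw [T_left hs1 hT le_rfl]; ring

include hs1 hT in
/-- folding identity: distance of `T x` below the maximum `s/2`. -/
lemma T_fold (x : ℝ) : s/2 - T x = s * |x - 1/2| := by
  rcases le_total x (1/2) with h | h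
  · rw [T_left hs1 hT h, abs_of_nonpos (by linarith)]; ring
  · rw [T_right hs1 hT h, abs_of_nonneg (by linarith)]; ring

include hs1 hT in
lemma T_le_max (x : ℝ) : T x ≤ s/2 := by
  have := T_fold hs1 hT x
  have := abs_nonneg (x - 1/2)
  nlinarith [s_pos hs1]

include hs1 hT in
/-- `T` scales distances by `s` on each side of the critical point. -/
lemma T_dist {x y : ℝ} (h : (x ≤ 1/2 ∧ y ≤ 1/2) ∨ (1/2 ≤ x ∧ 1/2 ≤ y)) :
    |T x - T y| = s * |x - y| := by
  rcases h with ⟨hx, hy⟩ | ⟨hx, hy⟩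
  · rw [T_left hs1 hT hx, T_left hs1 hT hy, ← mul_sub, abs_mul, abs_of_pos (s_pos hs1)]
  · rw [T_right hs1 hT hx, T_right hs1 hT hy, ← mul_sub, abs_mul, abs_of_pos (s_pos hs1)]
    congr 1
    rw [← abs_neg]
    ring_nf

include hT in
lemma T_sym (x : ℝ) : T (1 - x) = T x := by
  rw [hT, hT]; rw [min_comm]; ring_nf

end Basic

/-- orbit of the critical point -/
noncomputable def orb (T : ℝ → ℝ) (n : ℕ) : ℝ := T^[n] (1/2)

section Images

variable (hs1 : Real.sqrt 2 < s) (hs2 : s ≤ 2)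
  (hT : ∀ x, T x = min (s * x) (s * (1 - x)))

lemma side_of_not_mem {a b : ℝ} (h : (1:ℝ)/2 ∉ uIcc a b) :
    uIcc a b ⊆ Iic (1/2) ∨ uIcc a b ⊆ Ici (1/2) := by
  rcases le_total a (1/2) with ha | ha
  · left
    intro x hx
    rcases le_total x (1/2) with h1 | h1
    · exact h1
    · exact absurd (uIcc_subset_uIcc (left_mem_uIcc) hx (mem_uIcc.mpr (Or.inl ⟨ha, h1⟩))) h
  · right
    intro x hx
    rcases le_total (1/2) x with h1 | h1
    · exact h1
    · exact absurd (uIcc_subset_uIcc (left_mem_uIcc) hx (mem_uIcc.mpr (Or.inr ⟨h1, ha⟩))) h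

lemma side_of_endpoint {b : ℝ} :
    uIcc (1/2 : ℝ) b ⊆ Iic (1/2) ∨ uIcc (1/2 : ℝ) b ⊆ Ici (1/2) := by
  rcases le_total b (1/2) with hb | hb
  · left; rw [uIcc_of_ge hb]; exact Icc_subset_Iic_self
  · right; rw [uIcc_of_le hb]; exact Icc_subset_Ici_self

include hs1 hT in
lemma T_image_uIcc {a b : ℝ}
    (h : uIcc a b ⊆ Iic (1/2) ∨ uIcc a b ⊆ Ici (1/2)) :
    T '' uIcc a b = uIcc (T a) (T b) := by
  have ha := left_mem_uIcc (a := a) (b := b)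
  have hb := right_mem_uIcc (a := a) (b := b)
  rcases h with h | h
  · have : T '' uIcc a b = (fun x => s * x) '' uIcc a b := by
      apply image_congr
      intro x hx
      exact T_left hs1 hT (h hx)
    rw [this, image_const_mul_uIcc, ← T_left hs1 hT (h ha), ← T_left hs1 hT (h hb)]
  · have : T '' uIcc a b = (fun x => s - s * x) '' uIcc a b := by
      apply image_congr
      intro x hx
      rw [T_right hs1 hT (h hx)]; ring
    rw [this]
    have : (fun x => s - s * x) '' uIcc a b
        = (fun x => s - x) '' ((fun x => s * x) '' uIcc a b) := by
      rw [← image_comp]; rfl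
    rw [this, image_const_mul_uIcc, image_const_sub_uIcc,
        T_right hs1 hT (h ha), T_right hs1 hT (h hb)]
    congr 1 <;> ring

lemma orb_zero : orb T 0 = 1/2 := rfl

lemma orb_succ (n : ℕ) : orb T (n + 1) = T (orb T n) :=
  Function.iterate_succ_apply' T n (1/2)

include hs1 hT in
lemma orb_one : orb T 1 = s/2 := by rw [orb_succ, orb_zero, T_c hs1 hT]

include hs1 hs2 hT in
lemma orb_two : orb T 2 = s - s^2/2 := by
  rw [orb_succ, orb_one hs1 hT, T_right hs1 hT (by nlinarith [one_lt_s hs1])]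
  ring

include hs1 hs2 in
lemma c2_nonneg : (0:ℝ) ≤ s - s^2/2 := by nlinarith [one_lt_s hs1]

include hs1 in
lemma c2_lt_c : s - s^2/2 < 1/2 := by nlinarith [one_lt_s hs1]

include hs1 in
lemma c_lt_c1 : (1:ℝ)/2 < s/2 := by linarith [one_lt_s hs1]

include hs2 in
lemma c1_le_one : s/2 ≤ 1 := by linarith

include hs1 hs2 hT in
lemma T_mem_K {x : ℝ} (hx : x ∈ Icc (s - s^2/2) (s/2)) :
    T x ∈ Icc (s - s^2/2) (s/2) := by
  have h1 := one_lt_s hs1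
  constructor
  · rcases le_total x (1/2) with h | h
    · rw [T_left hs1 hT h]
      nlinarith [c2_nonneg hs1 hs2, hx.1]
    · rw [T_right hs1 hT h]
      nlinarith [hx.2]
  · exact T_le_max hs1 hT x

include hs1 hs2 hT in
lemma orb_mem_K {n : ℕ} (hn : 1 ≤ n) : orb T n ∈ Icc (s - s^2/2) (s/2) := by
  induction n with
  | zero => omega
  | succ m ih =>
    rcases Nat.eq_or_lt_of_le hn with h | h
    · rw [← h, orb_one hs1 hT]
      exact ⟨by nlinarith [one_lt_s hs1, c2_lt_c hs1], le_rfl⟩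
    · rw [orb_succ]
      exact T_mem_K hs1 hs2 hT (ih (by omega))

include hs1 hs2 hT in
lemma T_mem_01 {x : ℝ} (hx : x ∈ Icc (0:ℝ) 1) : T x ∈ Icc (0:ℝ) 1 := by
  have h0 := s_pos hs1
  constructor
  · rw [hT]
    rcases le_total x (1/2) with h | h
    · rw [min_eq_left (by nlinarith)]; nlinarith [hx.1]
    · rw [min_eq_right (by nlinarith)]; nlinarith [hx.2]
  · exact le_trans (T_le_max hs1 hT x) (by linarith)

include hs1 hs2 hT in
lemma K_sub_01 : Icc (s - s^2/2) (s/2) ⊆ Icc (0:ℝ) 1 :=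
  Icc_subset_Icc (c2_nonneg hs1 hs2) (c1_le_one hs2)

include hs1 hs2 hT in
/-- the image of the right core half `[c, c₁]` is the core `K`. -/
lemma T_image_right_half : T '' Icc (1/2) (s/2) = Icc (s - s^2/2) (s/2) := by
  have h1 := c_lt_c1 hs1
  have : Icc (1/2 : ℝ) (s/2) = uIcc (1/2) (s/2) := (uIcc_of_le h1.le).symm
  rw [this, T_image_uIcc hs1 hT side_of_endpoint, T_c hs1 hT,
      T_right hs1 hT h1.le]
  rw [show s * (1 - s/2) = s - s^2/2 by ring]
  rw [uIcc_of_ge (by nlinarith [one_lt_s hs1])]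

include hs1 hs2 hT in
/-- `T` maps the core onto the core. -/
lemma T_image_K : T '' Icc (s - s^2/2) (s/2) = Icc (s - s^2/2) (s/2) := by
  apply Subset.antisymm
  · rintro y ⟨x, hx, rfl⟩
    exact T_mem_K hs1 hs2 hT hx
  · intro y hy
    rw [← T_image_right_half hs1 hs2 hT] at hy
    exact image_mono (f := T) (Icc_subset_Icc (c2_lt_c hs1).le le_rfl) hy

end Images

/-! ### auxiliary order lemmas -/

lemma diam_uIcc' (a b : ℝ) : Metric.diam (Set.uIcc a b) = |a - b| := by
  rw [Set.uIcc, Real.diam_Icc inf_le_sup]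
  rcases le_total a b with h | h
  · rw [abs_of_nonpos (by linarith), inf_eq_left.mpr h, sup_eq_right.mpr h]; ring
  · rw [abs_of_nonneg (by linarith), inf_eq_right.mpr h, sup_eq_left.mpr h]

lemma uIcc_endpoints {a b u v : ℝ} (h : Set.uIcc a b = Set.uIcc u v) :
    (a = u ∧ b = v) ∨ (a = v ∧ b = u) := by
  have h1 : a ⊓ b = u ⊓ v := by
    have h2 : u ⊓ v ∈ Set.uIcc a b := h ▸ (⟨le_refl _, inf_le_sup⟩ : _ ∈ Set.Icc _ _)
    have h3 : a ⊓ b ∈ Set.uIcc u v := h.symm ▸ (⟨le_refl _, inf_le_sup⟩ : _ ∈ Set.Icc _ _)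
    exact le_antisymm h2.1 h3.1
  have h4 : a ⊔ b = u ⊔ v := by
    have h2 : u ⊔ v ∈ Set.uIcc a b := h ▸ (⟨inf_le_sup, le_refl _⟩ : _ ∈ Set.Icc _ _)
    have h3 : a ⊔ b ∈ Set.uIcc u v := h.symm ▸ (⟨inf_le_sup, le_refl _⟩ : _ ∈ Set.Icc _ _)
    exact le_antisymm h3.2 h2.2
  rcases le_total a b with hab' | hab' <;> rcases le_total u v with huv | huv <;>
    simp [inf_eq_left.mpr, sup_eq_right.mpr, hab', huv,
      inf_eq_left.mpr hab', sup_eq_right.mpr hab',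
      inf_eq_right.mpr, sup_eq_left.mpr] at h1 h4 <;> tauto

lemma order_trick {u w v half x : ℝ} (hv : v ∈ uIcc u w) (hx : x ∈ uIcc v u)
    (hhalf : half ∈ uIcc u w) (hnot : half ∉ uIcc v u) : x ∈ uIcc half u := by
  have hvm : v ∈ uIcc half u := by
    by_contra hcon
    rcases le_total u w with h | h
    · rw [uIcc_of_le h, mem_Icc] at hv hhalf
      rw [uIcc_comm, uIcc_of_le hhalf.1, mem_Icc] at hcon
      rw [uIcc_comm, uIcc_of_le hv.1, mem_Icc] at hnot
      push_neg at hcon hnot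
      linarith [hcon hv.1, hnot hhalf.1]
    · rw [uIcc_of_ge h, mem_Icc] at hv hhalf
      rw [uIcc_of_le hhalf.2, mem_Icc] at hcon
      rw [uIcc_of_le hv.2, mem_Icc] at hnot
      push_neg at hcon hnot
      by_cases h2 : v ≤ half
      · linarith [hnot h2]
      · push_neg at h2
        by_cases h3 : half ≤ v
        · linarith [hcon h3]
        · push_neg at h3; linarith
  exact uIcc_subset_uIcc hvm right_mem_uIcc hx

open scoped Classical in
/-- the index of the second endpoint of the Hofbauer level `D n`. -/
noncomputable def beta (D : ℕ → Set ℝ) : ℕ → ℕ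
  | 0 => 0
  | (n+1) => if n = 0 then 0 else (if (1/2:ℝ) ∈ D n then 1 else beta D n + 1)

lemma beta_one (D : ℕ → Set ℝ) : beta D 1 = 0 := by simp [beta]

lemma beta_succ_cut (D : ℕ → Set ℝ) {n : ℕ} (hn : 1 ≤ n) (h : (1/2:ℝ) ∈ D n) :
    beta D (n+1) = 1 := by
  obtain ⟨k, rfl⟩ : ∃ k, n = k + 1 := ⟨n - 1, by omega⟩
  simp only [beta]
  rw [if_neg (by omega : ¬ k + 1 = 0), if_pos h]

lemma beta_succ_not (D : ℕ → Set ℝ) {n : ℕ} (hn : 1 ≤ n) (h : (1/2:ℝ) ∉ D n) :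
    beta D (n+1) = beta D n + 1 := by
  obtain ⟨k, rfl⟩ : ∃ k, n = k + 1 := ⟨n - 1, by omega⟩
  simp only [beta]
  rw [if_neg (by omega : ¬ k + 1 = 0), if_neg h]

section Iter

variable (hs1 : Real.sqrt 2 < s) (hs2 : s ≤ 2)
  (hT : ∀ x, T x = min (s * x) (s * (1 - x)))

include hs1 hT in
lemma sym_iterate {g : ℕ} (hg : 1 ≤ g) (x : ℝ) : T^[g] (1 - x) = T^[g] x := by
  obtain ⟨k, rfl⟩ : ∃ k, g = k + 1 := ⟨g - 1, by omega⟩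
  rw [Function.iterate_succ_apply, Function.iterate_succ_apply, T_sym hT]

include hs1 hT in
lemma iter_image (m : ℕ) (r : ℝ) (hr : 1/2 ≤ r)
    (hside : ∀ l, l < m → T^[l] '' Icc (1/2) r ⊆ Iic (1/2) ∨ T^[l] '' Icc (1/2) r ⊆ Ici (1/2)) :
    T^[m] '' Icc (1/2) r = uIcc (orb T m) (T^[m] r) ∧
    ∀ x ∈ Icc (1/2:ℝ) r, ∀ y ∈ Icc (1/2:ℝ) r, |T^[m] x - T^[m] y| = s^m * |x - y| := by
  induction m with
  | zero =>
    constructor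
    · simp only [Function.iterate_zero, image_id', orb_zero, id]
      exact (uIcc_of_le hr).symm
    · intro x _ y _
      simp
  | succ m ih =>
    obtain ⟨him, hsc⟩ := ih (fun l hl => hside l (by omega))
    have hsidem := hside m (by omega)
    rw [him] at hsidem
    constructor
    · rw [Function.iterate_succ', Set.image_comp, him, T_image_uIcc hs1 hT hsidem, orb_succ]
      rfl
    · intro x hx y hy
      have hmx : T^[m] x ∈ uIcc (orb T m) (T^[m] r) := him ▸ mem_image_of_mem _ hx
      have hmy : T^[m] y ∈ uIcc (orb T m) (T^[m] r) := him ▸ mem_image_of_mem _ hy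
      rw [Function.iterate_succ_apply' T m x, Function.iterate_succ_apply' T m y]
      have : |T (T^[m] x) - T (T^[m] y)| = s * |T^[m] x - T^[m] y| := by
        apply T_dist hs1 hT
        rcases hsidem with hs' | hs'
        · exact Or.inl ⟨hs' hmx, hs' hmy⟩
        · exact Or.inr ⟨hs' hmx, hs' hmy⟩
      rw [this, hsc x hx y hy, pow_succ]; ring

end Iter

section Tower

variable {D : ℕ → Set ℝ}
variable (hs1 : Real.sqrt 2 < s) (hs2 : s ≤ 2)
  (hT : ∀ x, T x = min (s * x) (s * (1 - x)))
  (hD1 : D 1 = Set.uIcc (1/2) (T (1/2)))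
  (hDcut : ∀ n, 1 ≤ n → (1/2:ℝ) ∈ D n → D (n + 1) = Set.uIcc (T^[n+1] (1/2)) (T (1/2)))
  (hDnot : ∀ n, 1 ≤ n → (1/2:ℝ) ∉ D n → D (n + 1) = T '' D n)

include hD1 in
lemma cut_one : (1/2:ℝ) ∈ D 1 := by rw [hD1]; exact left_mem_uIcc

include hs1 hT hD1 hDcut hDnot in
lemma L1 : ∀ n, 1 ≤ n → D n = uIcc (orb T n) (orb T (beta D n)) := by
  intro n hn
  induction n with
  | zero => omega
  | succ m ih =>
    rcases Nat.eq_or_lt_of_le hn with h | h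
    · rw [← h, beta_one, hD1, uIcc_comm]
      rfl
    · have hm : 1 ≤ m := by omega
      by_cases hc : (1/2:ℝ) ∈ D m
      · rw [hDcut m hm hc, beta_succ_cut D hm hc]
        rfl
      · rw [hDnot m hm hc, beta_succ_not D hm hc, ih hm,
          T_image_uIcc hs1 hT (side_of_not_mem (by rw [← ih hm]; exact hc)),
          show T (orb T m) = orb T (m+1) from (orb_succ m).symm,
          show T (orb T (beta D m)) = orb T (beta D m + 1) from (orb_succ _).symm]

include hs1 hT hD1 hDcut hDnot in
lemma L2 : ∀ n, 1 ≤ n → (1/2:ℝ) ∈ D (n + 1 - beta D (n+1)) ∧ 1 ≤ beta D (n+1) ∧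
    beta D (n+1) ≤ n ∧ ∀ l, n + 1 - beta D (n+1) < l → l < n + 1 → (1/2:ℝ) ∉ D l := by
  intro n hn
  induction n with
  | zero => omega
  | succ m ih =>
    by_cases hc : (1/2:ℝ) ∈ D (m+1)
    · rw [beta_succ_cut D (by omega) hc]
      refine ⟨by simpa using hc, le_rfl, by omega, ?_⟩
      intro l h1 h2
      omega
    · have hm : 1 ≤ m := by
        rcases Nat.eq_or_lt_of_le hn with h | h
        · exfalso; apply hc
          have : m = 0 := by omega
          rw [this]; exact cut_one hD1
        · omega
      obtain ⟨ha, hb, hcle, hd⟩ := ih hm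
      rw [beta_succ_not D (by omega) hc]
      have harith : m + 1 + 1 - (beta D (m+1) + 1) = m + 1 - beta D (m+1) := by omega
      rw [harith]
      refine ⟨ha, by omega, by omega, ?_⟩
      intro l h1 h2
      rcases Nat.lt_or_ge l (m+1) with h3 | h3
      · exact hd l h1 h3
      · have : l = m + 1 := by omega
        rwa [this]

include hs1 hT hD1 hDcut hDnot in
lemma betaAdd : ∀ l, 1 ≤ l → ∀ S, 1 ≤ S → (1/2:ℝ) ∈ D S →
    (∀ l', 0 < l' → l' < l → (1/2:ℝ) ∉ D (S + l')) → beta D (S + l) = l := by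
  intro l hl
  induction l with
  | zero => omega
  | succ k ih =>
    intro S hS hcS hmid
    rcases Nat.eq_or_lt_of_le hl with h | h
    · have : k = 0 := by omega
      subst this
      exact beta_succ_cut D hS hcS
    · have hk : 1 ≤ k := by omega
      have : beta D (S + k) = k := ih hk S hS hcS (fun l' h1 h2 => hmid l' h1 (by omega))
      have hnc' : (1/2:ℝ) ∉ D (S + k) := hmid k (by omega) (by omega)
      have h5 : beta D (S + k + 1) = beta D (S + k) + 1 := beta_succ_not D (by omega) hnc'
      have harith : S + (k+1) = S + k + 1 := by omega
      rw [harith, h5]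
      omega

include hs1 hs2 hT hD1 hDcut hDnot in
lemma NEST : ∀ S g, 1 ≤ S → (1/2:ℝ) ∈ D S → 1 ≤ g →
    (∀ l, 0 < l → l < g → (1/2:ℝ) ∉ D (S + l)) → (1/2:ℝ) ∈ D (S + g) → (1/2:ℝ) ∈ D g := by
  intro S g hS hcS hg hmid hcSg
  rcases Nat.eq_or_lt_of_le hg with h1 | h1
  · rw [← h1]; exact cut_one hD1
  -- g ≥ 2 : show D (S + l) ⊆ D l for 1 ≤ l ≤ g by induction
  have key : ∀ l, 1 ≤ l → l ≤ g → D (S + l) ⊆ D l := by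
    intro l hl
    induction l with
    | zero => omega
    | succ k ih =>
      intro hlg
      rcases Nat.eq_or_lt_of_le hl with h2 | h2
      · -- l = 1
        have hk0 : k = 0 := by omega
        subst hk0
        have hc1 : (1/2:ℝ) ∉ D (S + 1) := hmid 1 (by omega) (by omega)
        rw [hDcut S hS hcS] at hc1 ⊢
        rw [hD1]
        have hle : T^[S+1] (1/2) ≤ T (1/2) := by
          rw [T_c hs1 hT, Function.iterate_succ_apply']
          exact T_le_max hs1 hT _
        have h12 : (1/2:ℝ) < T^[S+1] (1/2) := by
          by_contra hcon
          push_neg at hcon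
          exact hc1 (mem_uIcc_of_le hcon (by linarith [c_lt_c1 hs1, T_c hs1 hT]))
        intro x hx
        rw [uIcc_of_le hle, mem_Icc] at hx
        exact mem_uIcc_of_le (by linarith) (by linarith [hx.2, (T_c hs1 hT)])
      · -- step: k ≥ 1, prove for k+1 from ih for k
        have hk : 1 ≤ k := by omega
        have hsub : D (S + k) ⊆ D k := ih hk (by omega)
        have hnck : (1/2:ℝ) ∉ D (S + k) := hmid k (by omega) (by omega)
        have hSk : S + (k + 1) = (S + k) + 1 := by omega
        rw [hSk, hDnot (S + k) (by omega) hnck]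
        by_cases hck : (1/2:ℝ) ∈ D k
        · -- cut at k : D (S+k) ⊆ uIcc (1/2) (orb k), image lands in D (k+1)
          have hbSk : beta D (S + k) = k :=
            betaAdd hs1 hT hD1 hDcut hDnot k hk S hS hcS
              (fun l' ha hb => hmid l' ha (by omega))
          have hDSk : D (S + k) = uIcc (orb T (S + k)) (orb T k) := by
            rw [L1 hs1 hT hD1 hDcut hDnot (S + k) (by omega), hbSk]
          have hDk : D k = uIcc (orb T k) (orb T (beta D k)) :=
            L1 hs1 hT hD1 hDcut hDnot k hk
          have hsub2 : D (S + k) ⊆ uIcc (1/2) (orb T k) := by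
            intro x hx
            apply order_trick (v := orb T (S + k)) (w := orb T (beta D k))
              (u := orb T k) (half := (1/2:ℝ))
            · rw [← hDk]
              exact hsub (by rw [hDSk]; exact left_mem_uIcc)
            · rwa [← hDSk]
            · rw [← hDk]; exact hck
            · rw [← hDSk]; exact hnck
          have himg : T '' uIcc (1/2) (orb T k) = uIcc (T (1/2)) (T (orb T k)) :=
            T_image_uIcc hs1 hT side_of_endpoint
          rw [hDcut k hk hck]
          intro y hy
          obtain ⟨x, hx, rfl⟩ := hy
          have h6 : T x ∈ uIcc (T (1/2)) (T (orb T k)) := himg ▸ mem_image_of_mem T (hsub2 hx)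
          rw [uIcc_comm,
            show (T^[k+1] (1/2:ℝ)) = T (orb T k) from Function.iterate_succ_apply' T k (1/2)]
          exact h6
        · rw [hDnot k hk hck]
          exact image_mono (f := T) hsub
  exact key g (by omega) le_rfl hcSg

include hs1 hs2 hT hD1 hDcut hDnot in
lemma cutBeta : ∀ q, 2 ≤ q → (1/2:ℝ) ∈ D q → (1/2:ℝ) ∈ D (beta D q) := by
  intro q hq hcq
  obtain ⟨n, rfl⟩ : ∃ n, q = n + 1 := ⟨q - 1, by omega⟩
  have hn : 1 ≤ n := by omega
  obtain ⟨ha, hb, hc, hd⟩ := L2 hs1 hT hD1 hDcut hDnot n hn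
  have harith : n + 1 - beta D (n+1) + beta D (n+1) = n + 1 := by omega
  apply NEST hs1 hs2 hT hD1 hDcut hDnot (n + 1 - beta D (n+1)) (beta D (n+1))
    (by omega) ha hb
  · intro l h1 h2
    exact hd _ (by omega) (by omega)
  · rw [harith]; exact hcq

include hs1 hs2 hT hD1 hDcut hDnot in
/-- **Branch lemma**: the image of the maximal branch of `T^[m]` adjacent to the critical
point (on the right) is a level of the Hofbauer tower. -/
lemma BR (hnc : ∀ n, 1 ≤ n → T^[n] (1/2) ≠ (1/2:ℝ))
    (hinf : Function.Injective fun n : ℕ => T^[n] ((1:ℝ)/2)) :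
    ∀ m, 1 ≤ m → ∃ r q, 1/2 < r ∧ r ≤ s/2 ∧ 1 ≤ q ∧
    (∀ l, l < m → T^[l] '' Icc (1/2) r ⊆ Iic (1/2) ∨ T^[l] '' Icc (1/2) r ⊆ Ici (1/2)) ∧
    T^[m] '' Icc (1/2) r = D q ∧
    (∀ x, 1/2 < x → x < r → ∀ l, 1 ≤ l → l < m → T^[l] x ≠ 1/2) := by
  intro m hm
  induction m with
  | zero => omega
  | succ m ih =>
    rcases Nat.eq_or_lt_of_le hm with h1 | h1
    · -- base case m+1 = 1
      have hm0 : m = 0 := by omega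
      subst hm0
      refine ⟨s/2, 2, c_lt_c1 hs1, le_rfl, by omega, ?_, ?_, by omega⟩
      · intro l hl
        have : l = 0 := by omega
        subst this
        right
        simp only [Function.iterate_zero, image_id', id]
        exact fun x hx => le_trans (by norm_num) hx.1
      · rw [Function.iterate_one, T_image_right_half hs1 hs2 hT,
          hDcut 1 le_rfl (cut_one hD1)]
        rw [show (T^[1+1] (1/2:ℝ)) = orb T 2 from rfl, orb_two hs1 hs2 hT, T_c hs1 hT]
        rw [uIcc_of_le (by nlinarith [one_lt_s hs1, c2_lt_c hs1, c_lt_c1 hs1])]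
    · -- inductive step, m ≥ 1
      have hm1 : 1 ≤ m := by omega
      obtain ⟨r, q, hr1, hr2, hq1, hside, him, hpre⟩ := ih hm1
      obtain ⟨himg, hscale⟩ := iter_image hs1 hT m r hr1.le hside
      have hDq : D q = uIcc (orb T m) (T^[m] r) := him.symm.trans himg
      by_cases hc : (1/2:ℝ) ∈ D q
      · -- cut case
        obtain ⟨y, hy, hTy⟩ : ∃ y ∈ Icc (1/2:ℝ) r, T^[m] y = 1/2 := by
          rw [← him] at hc
          obtain ⟨y, hy, hTy⟩ := hc
          exact ⟨y, hy, hTy⟩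
        have hy1 : (1/2:ℝ) < y := by
          rcases eq_or_lt_of_le hy.1 with h | h
          · exfalso; exact hnc m hm1 (by rw [← h] at hTy; exact hTy)
          · exact h
        -- identify m as a cut time
        have hm_cut : (1/2:ℝ) ∈ D m := by
          have hL1 : D q = uIcc (orb T q) (orb T (beta D q)) :=
            L1 hs1 hT hD1 hDcut hDnot q hq1
          have hep := uIcc_endpoints (hDq.symm.trans hL1)
          have horb : orb T m = orb T q ∨ orb T m = orb T (beta D q) := by
            rcases hep with ⟨h2, _⟩ | ⟨h2, _⟩
            · exact Or.inl h2
            · exact Or.inr h2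
          rcases horb with h2 | h2
          · have : m = q := hinf h2
            rwa [this]
          · have hmb : m = beta D q := hinf h2
            rcases Nat.lt_or_ge q 2 with hq2 | hq2
            · exfalso
              have : q = 1 := by omega
              rw [this, beta_one] at hmb
              omega
            · have := cutBeta hs1 hs2 hT hD1 hDcut hDnot q hq2 hc
              rwa [← hmb] at this
        -- the new branch is [1/2, y]
        have hside' : ∀ l, l < m →
            T^[l] '' Icc (1/2) y ⊆ Iic (1/2) ∨ T^[l] '' Icc (1/2) y ⊆ Ici (1/2) := by
          intro l hl
          rcases hside l hl with h' | h'
          · exact Or.inl (Subset.trans (image_mono (Icc_subset_Icc_right hy.2)) h')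
          · exact Or.inr (Subset.trans (image_mono (Icc_subset_Icc_right hy.2)) h')
        obtain ⟨himgy, hscaley⟩ := iter_image hs1 hT m y hy1.le hside'
        rw [hTy] at himgy
        refine ⟨y, m+1, hy1, le_trans hy.2 hr2, by omega, ?_, ?_, ?_⟩
        · intro l hl
          rcases Nat.lt_or_ge l m with h' | h'
          · exact hside' l h'
          · have : l = m := by omega
            subst this
            rw [himgy, uIcc_comm]
            exact side_of_endpoint
        · rw [Function.iterate_succ', Set.image_comp, himgy,
            T_image_uIcc hs1 hT (by rw [uIcc_comm]; exact side_of_endpoint),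
            hDcut m hm1 hm_cut]
          rw [show (T^[m+1] (1/2:ℝ)) = T (orb T m) from Function.iterate_succ_apply' T m (1/2)]
        · intro x hx1 hx2 l hl1 hl2
          rcases Nat.lt_or_ge l m with h' | h'
          · exact hpre x hx1 (lt_of_lt_of_le hx2 hy.2) l hl1 h'
          · have hlm : l = m := by omega
            subst hlm
            intro hcon
            have := hscale x ⟨hx1.le, le_trans hx2.le hy.2⟩ y hy
            rw [hTy, hcon, sub_self, abs_zero] at this
            have hxn : |x - y| = 0 := by
              have hs0 : (0:ℝ) < s ^ l := pow_pos (s_pos hs1) l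
              by_contra hne
              have : 0 < |x - y| := lt_of_le_of_ne (abs_nonneg _) (Ne.symm hne)
              nlinarith
            rw [abs_eq_zero, sub_eq_zero] at hxn
            rw [hxn] at hx2
            exact lt_irrefl y hx2
      · -- non-cut case
        refine ⟨r, q+1, hr1, hr2, by omega, ?_, ?_, ?_⟩
        · intro l hl
          rcases Nat.lt_or_ge l m with h' | h'
          · exact hside l h'
          · have : l = m := by omega
            subst this
            rw [himg]
            exact side_of_not_mem (by rw [← hDq] at *; exact hc)
        · rw [Function.iterate_succ', Set.image_comp, him, hDnot q hq1 hc]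
        · intro x hx1 hx2 l hl1 hl2
          rcases Nat.lt_or_ge l m with h' | h'
          · exact hpre x hx1 hx2 l hl1 h'
          · have : l = m := by omega
            subst this
            intro hcon
            apply hc
            rw [← him]
            exact ⟨x, ⟨hx1.le, hx2.le⟩, hcon⟩

include hs1 hs2 hT hD1 hDcut hDnot in
/-- points mapping to the critical point in `g` steps are `δ/s^(g+1)`-far from it. -/
lemma precrit_far (hnc : ∀ n, 1 ≤ n → T^[n] (1/2) ≠ (1/2:ℝ))
    (hinf : Function.Injective fun n : ℕ => T^[n] ((1:ℝ)/2))
    {δ : ℝ} (hδ : 0 < δ) (hlong : ∀ n, 1 ≤ n → δ ≤ Metric.diam (D n)) :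
    ∀ g x, 1 ≤ g → T^[g] x = 1/2 → x ≠ 1/2 → δ / s^(g+1) ≤ |x - 1/2| := by
  have main : ∀ g x, 1 ≤ g → T^[g] x = 1/2 → 1/2 < x → δ / s^(g+1) ≤ |x - 1/2| := by
    intro g x hg hgx hx
    obtain ⟨r, q, hr1, hr2, hq1, hside, him, hpre⟩ :=
      BR hs1 hs2 hT hD1 hDcut hDnot hnc hinf (g+1) (by omega)
    obtain ⟨himg, hscale⟩ := iter_image hs1 hT (g+1) r hr1.le hside
    have hdiam : Metric.diam (D q) = s^(g+1) * (r - 1/2) := by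
      rw [← him, himg, diam_uIcc',
        show (orb T (g+1)) = T^[g+1] (1/2) from rfl,
        hscale (1/2) ⟨le_rfl, hr1.le⟩ r ⟨hr1.le, le_rfl⟩,
        abs_of_nonpos (by linarith)]
      ring_nf
    have hrbound : δ / s^(g+1) ≤ r - 1/2 := by
      have := hlong q hq1
      rw [hdiam] at this
      rw [div_le_iff₀ (pow_pos (s_pos hs1) _)]
      linarith [this]
    rcases Nat.lt_or_ge 0 1 with _ | _
    · rcases le_or_gt r x with h | h
      · rw [abs_of_nonneg (by linarith)]
        linarith
      · exfalso
        exact hpre x hx h g hg (by omega) hgx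
    · omega
  intro g x hg hgx hx
  rcases lt_trichotomy x (1/2) with h | h | h
  · have hgx' : T^[g] (1 - x) = 1/2 := by rw [sym_iterate hs1 hT hg]; exact hgx
    have := main g (1 - x) hg hgx' (by linarith)
    have habs : |1 - x - 1/2| = |x - 1/2| := by
      rw [abs_sub_comm (x:ℝ) (1/2)]
      congr 1
      ring
    rwa [habs] at this
  · exact absurd h hx
  · exact main g x hg hgx h

end Tower

section Leo

variable (hs1 : Real.sqrt 2 < s) (hs2 : s ≤ 2)
  (hT : ∀ x, T x = min (s * x) (s * (1 - x)))

include hs1 hT in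
lemma T_image_Icc_left {a b : ℝ} (hab : a ≤ b) (hb : b ≤ 1/2) :
    T '' Icc a b = Icc (s * a) (s * b) := by
  rw [← uIcc_of_le hab, T_image_uIcc hs1 hT (Or.inl (by rw [uIcc_of_le hab]; exact fun x hx => le_trans hx.2 hb)),
    T_left hs1 hT (le_trans hab hb), T_left hs1 hT hb,
    uIcc_of_le (by nlinarith [s_pos hs1])]

include hs1 hT in
lemma T_image_Icc_right {a b : ℝ} (hab : a ≤ b) (ha : 1/2 ≤ a) :
    T '' Icc a b = Icc (s * (1 - b)) (s * (1 - a)) := by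
  rw [← uIcc_of_le hab, T_image_uIcc hs1 hT (Or.inr (by rw [uIcc_of_le hab]; exact fun x hx => le_trans ha hx.1)),
    T_right hs1 hT ha, T_right hs1 hT (le_trans ha hab),
    uIcc_comm, uIcc_of_le (by nlinarith [s_pos hs1])]

include hs1 hs2 hT in
lemma leo_aux : ∀ n : ℕ, ∀ a b : ℝ, a < b → Icc a b ⊆ Icc 0 1 →
    1 < (s^2/2)^n * (b - a) →
    ∃ m, m ≤ 2*n ∧ Icc (1/2) (s/2) ⊆ T^[m] '' Icc a b := by
  intro n
  induction n with
  | zero =>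
    intro a b hab hsub hbig
    exfalso
    have h0 := (hsub (left_mem_Icc.mpr hab.le)).1
    have h1 := (hsub (right_mem_Icc.mpr hab.le)).2
    simp only [pow_zero, one_mul] at hbig
    linarith
  | succ n ih =>
    intro a b hab hsub hbig
    have hs0 := s_pos hs1
    have hsq : 1 < s^2/2 := by nlinarith [two_lt_sq hs1]
    have hpow : (0:ℝ) < (s^2/2)^n := pow_pos (by linarith) n
    have hssq : s^2/2 ≤ s := by nlinarith
    have h0 := (hsub (left_mem_Icc.mpr hab.le)).1
    have h1 := (hsub (right_mem_Icc.mpr hab.le)).2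
    by_cases hcase : b ≤ 1/2 ∨ 1/2 ≤ a
    · -- interval is on one side: apply T once, length multiplies by s
      have key : ∃ a' b', T '' Icc a b = Icc a' b' ∧ b' - a' = s * (b - a) ∧
          Icc a' b' ⊆ Icc 0 1 := by
        rcases hcase with h | h
        · refine ⟨s * a, s * b, T_image_Icc_left hs1 hT hab.le h, by ring, ?_⟩
          intro x hx
          constructor
          · nlinarith [hx.1]
          · nlinarith [hx.2]
        · refine ⟨s * (1 - b), s * (1 - a), T_image_Icc_right hs1 hT hab.le h, by ring, ?_⟩
          intro x hx
          constructor
          · nlinarith [hx.1]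
          · nlinarith [hx.2]
      obtain ⟨a', b', heq, hlen, hsub'⟩ := key
      have hab' : a' < b' := by nlinarith
      obtain ⟨m, hm, hK⟩ := ih a' b' hab' hsub' (by
        rw [hlen]
        calc (1:ℝ) < (s^2/2)^(n+1) * (b - a) := hbig
        _ = (s^2/2)^n * (s^2/2 * (b-a)) := by ring
        _ ≤ (s^2/2)^n * (s * (b-a)) := by
            apply mul_le_mul_of_nonneg_left _ hpow.le
            nlinarith)
      refine ⟨m + 1, by omega, ?_⟩
      rw [Function.iterate_succ, Set.image_comp]
      rw [← heq] at hK
      exact hK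
    · -- interval straddles 1/2
      push_neg at hcase
      obtain ⟨hb2, ha2⟩ := hcase
      -- get a subinterval [v, s/2] of T''[a,b] with s/2 - v ≥ s(b-a)/2
      have key : ∃ v, Icc v (s/2) ⊆ T '' Icc a b ∧ s * (b - a) / 2 ≤ s/2 - v ∧ 0 ≤ v := by
        rcases le_total (1/2 - a) (b - 1/2) with h | h
        · refine ⟨s * (1 - b), ?_, by nlinarith, by nlinarith⟩
          have : T '' Icc (1/2) b ⊆ T '' Icc a b :=
            image_mono (f := T) (Icc_subset_Icc (by linarith) le_rfl)
          rw [T_image_Icc_right hs1 hT (by linarith) le_rfl] at this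
          have he : s * (1 - 1/2) = s/2 := by ring
          rw [he] at this
          exact this
        · refine ⟨s * a, ?_, by nlinarith, by nlinarith⟩
          have : T '' Icc a (1/2) ⊆ T '' Icc a b :=
            image_mono (f := T) (Icc_subset_Icc le_rfl (by linarith))
          rw [T_image_Icc_left hs1 hT (by linarith) le_rfl] at this
          have he : s * (1/2 : ℝ) = s/2 := by ring
          rw [he] at this
          exact this
      obtain ⟨v, hvsub, hvlen, hv0⟩ := key
      rcases le_total v (1/2) with hv | hv
      · -- already contains [1/2, s/2]
        refine ⟨1, by omega, ?_⟩
        rw [Function.iterate_one]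
        exact Subset.trans (Icc_subset_Icc hv le_rfl) hvsub
      · -- apply T once more to [v, s/2]
        have hvlt : v < s/2 := by nlinarith
        have himg2 : T '' Icc v (s/2) = Icc (s * (1 - s/2)) (s * (1 - v)) :=
          T_image_Icc_right hs1 hT hvlt.le hv
        have hab2 : s * (1 - s/2) < s * (1 - v) := by nlinarith
        have he1 : s * (1 - s/2) = s - s^2/2 := by ring
        have hup : s * (1 - v) ≤ s/2 := by nlinarith
        have hsub2 : Icc (s * (1 - s/2)) (s * (1 - v)) ⊆ Icc (0:ℝ) 1 := by
          intro x hx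
          obtain ⟨hx1, hx2⟩ := hx
          constructor
          · have := c2_nonneg hs1 hs2
            linarith [he1 ▸ hx1]
          · linarith
        have hbig2 : 1 < (s^2/2)^n * (s * (1 - v) - s * (1 - s/2)) := by
          have hlen2 : s * (1 - v) - s * (1 - s/2) = s * (s/2 - v) := by ring
          rw [hlen2]
          have hq1 : (s^2/2) * (b-a) ≤ s * (s/2 - v) := by nlinarith
          have hq2 : (s^2/2)^n * ((s^2/2) * (b-a)) ≤ (s^2/2)^n * (s * (s/2 - v)) :=
            mul_le_mul_of_nonneg_left hq1 hpow.le
          calc (1:ℝ) < (s^2/2)^(n+1) * (b - a) := hbig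
          _ = (s^2/2)^n * ((s^2/2) * (b-a)) := by ring
          _ ≤ _ := hq2
        obtain ⟨m, hm, hK⟩ := ih (s * (1 - s/2)) (s * (1 - v)) hab2 hsub2 hbig2
        refine ⟨m + 2, by omega, ?_⟩
        have hstep : Icc (s * (1 - s/2)) (s * (1 - v)) ⊆ T^[2] '' Icc a b := by
          rw [← himg2]
          intro y hy
          obtain ⟨x, hx, rfl⟩ := hy
          obtain ⟨w, hw, rfl⟩ := hvsub hx
          exact ⟨w, hw, rfl⟩
        calc Icc (1/2) (s/2) ⊆ T^[m] '' Icc (s * (1 - s/2)) (s * (1 - v)) := hK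
        _ ⊆ T^[m] '' (T^[2] '' Icc a b) := image_mono hstep
        _ = T^[m+2] '' Icc a b := by
            rw [← Set.image_comp, ← Function.iterate_add]

include hs1 hs2 hT in
lemma leo_up {A : Set ℝ} {m : ℕ} (h : Icc (1/2) (s/2) ⊆ T^[m] '' A) :
    ∀ k, m + 1 ≤ k → Icc (s - s^2/2) (s/2) ⊆ T^[k] '' A := by
  have step : ∀ k, Icc (s - s^2/2) (s/2) ⊆ T^[k] '' A →
      Icc (s - s^2/2) (s/2) ⊆ T^[k+1] '' A := by
    intro k hk
    rw [← T_image_K hs1 hs2 hT]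
    intro y hy
    obtain ⟨x, hx, rfl⟩ := hy
    obtain ⟨w, hw, rfl⟩ := hk hx
    exact ⟨w, hw, Function.iterate_succ_apply' T k w⟩
  have base : Icc (s - s^2/2) (s/2) ⊆ T^[m+1] '' A := by
    rw [← T_image_right_half hs1 hs2 hT]
    intro y hy
    obtain ⟨x, hx, rfl⟩ := hy
    obtain ⟨w, hw, rfl⟩ := h hx
    exact ⟨w, hw, Function.iterate_succ_apply' T m w⟩
  intro k hk
  obtain ⟨j, rfl⟩ : ∃ j, k = (m+1) + j := ⟨k - (m+1), by omega⟩
  induction j with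
  | zero => exact base
  | succ i ih =>
    have := step ((m+1)+i) (ih (by omega))
    rwa [show (m+1) + (i+1) = ((m+1)+i)+1 from by omega]

include hs1 hs2 hT in
/-- uniform locally-eventually-onto property -/
lemma leo {ε : ℝ} (hε : 0 < ε) : ∃ M : ℕ, ∀ a b : ℝ, a < b → ε ≤ b - a →
    Icc a b ⊆ Icc 0 1 → ∀ k, M ≤ k → Icc (s - s^2/2) (s/2) ⊆ T^[k] '' Icc a b := by
  have hsq : 1 < s^2/2 := by nlinarith [two_lt_sq hs1]
  obtain ⟨n, hn⟩ := pow_unbounded_of_one_lt (1/ε) hsq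
  refine ⟨2*n + 1, ?_⟩
  intro a b hab hlen hsub k hk
  obtain ⟨m, hm, hK⟩ := leo_aux hs1 hs2 hT n a b hab hsub (by
    have hp : (0:ℝ) < (s^2/2)^n := pow_pos (by linarith) n
    calc (1:ℝ) = (1/ε) * ε := by field_simp
    _ < (s^2/2)^n * ε := by exact mul_lt_mul_of_pos_right hn hε
    _ ≤ (s^2/2)^n * (b - a) := by exact mul_le_mul_of_nonneg_left hlen hp.le)
  exact leo_up hs1 hs2 hT hK k (by omega)

end Leo

end Stmt8



open Stmt8

/-- If the tent map `T` is long-branched (`inf_n |D n| > 0`), then every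
proper subcontinuum of the core inverse limit `X′` is a point or an arc. -/
theorem stmt8 (s : ℝ) (hs : s ∈ Set.Ioc (Real.sqrt 2) 2) (T : ℝ → ℝ)
    (hT : ∀ x, T x = min (s * x) (s * (1 - x))) (c : ℝ) (hc : c = 1/2)
    (hnc : ∀ n, 1 ≤ n → T^[n] c ≠ c)
    (hinf : Function.Injective fun n : ℕ => T^[n] c)
    (D : ℕ → Set ℝ)
    (hD1 : D 1 = Set.uIcc c (T c))
    (hDcut : ∀ n, 1 ≤ n → c ∈ D n → D (n + 1) = Set.uIcc (T^[n+1] c) (T c))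
    (hDnot : ∀ n, 1 ≤ n → c ∉ D n → D (n + 1) = T '' D n)
    (hlong : ∃ δ > (0:ℝ), ∀ n, 1 ≤ n → δ ≤ Metric.diam (D n))
    (K : Set ℝ) (hK : K = Set.Icc (T^[2] c) (T c))
    (H : Set (InvLim T K)) (hne : H.Nonempty) (hcomp : IsCompact H)
    (hconn : IsConnected H) (hproper : H ≠ Set.univ) :
    (∃ a, H = {a}) ∨ IsArc H := by
  subst hc
  obtain ⟨hs1, hs2⟩ := hs
  obtain ⟨δ, hδ, hlong'⟩ := hlong
  have hs0 := s_pos hs1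
  have hs1' := one_lt_s hs1
  -- the core
  have hKval : K = Icc (s - s^2/2) (s/2) := by
    rw [hK, show (T^[2] ((1:ℝ)/2)) = orb T 2 from rfl, orb_two hs1 hs2 hT, T_c hs1 hT]
  -- projections of H
  set P : ℕ → Set ℝ := fun i => (fun h : InvLim T K => h.val i) '' H with hPdef
  have hval : ∀ (z : InvLim T K) (k i : ℕ), z.val i = T^[k] (z.val (i + k)) := by
    intro z k
    induction k with
    | zero => intro i; rfl
    | succ m ihm =>
      intro i
      have h1 : z.val i = T^[m] (z.val (i + m)) := ihm i
      have h2 : T (z.val (i + m + 1)) = z.val (i + m) := z.2.2 (i + m)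
      rw [h1, ← h2, ← Function.iterate_succ_apply]
      rfl
  have Pim : ∀ i k, P i = T^[k] '' P (i + k) := by
    intro i k
    have hfun : (fun h : InvLim T K => h.val i)
        = T^[k] ∘ (fun h : InvLim T K => h.val (i + k)) := by
      funext z; exact hval z k i
    show (fun h : InvLim T K => h.val i) '' H = _
    rw [hfun, Set.image_comp]
  have Pcont : ∀ i, Continuous (fun h : InvLim T K => h.val i) := by
    intro i
    exact (continuous_apply i).comp continuous_subtype_val
  have Pne : ∀ i, (P i).Nonempty := fun i => hne.image _
  have Psub : ∀ i, P i ⊆ Icc (s - s^2/2) (s/2) := by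
    rintro i y ⟨z, hz, rfl⟩
    rw [← hKval]
    exact z.2.1 i
  have PIcc : ∀ i, P i = Icc (sInf (P i)) (sSup (P i)) := by
    intro i
    exact eq_Icc_of_connected_compact (hconn.image _ (Pcont i).continuousOn)
      (hcomp.image (Pcont i))
  have Pab : ∀ i, sInf (P i) ≤ sSup (P i) := by
    intro i
    obtain ⟨y, hy⟩ := Pne i
    have := (PIcc i) ▸ hy
    exact le_trans this.1 this.2
  by_cases hfin : ∃ N, ∀ i, N ≤ i → (1/2 : ℝ) ∉ P i
  · -- eventually the critical point avoids the projections : point or arc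
    obtain ⟨N, hN⟩ := hfin
    apply point_or_arc hcomp hconn (Pcont N)
    intro h hh h' hh' hNN
    have aux : ∀ j, h.val (N + j) = h'.val (N + j) := by
      intro j
      induction j with
      | zero => exact hNN
      | succ m ihm =>
        have hm1 : h.val (N + m + 1) ∈ P (N + m + 1) := mem_image_of_mem _ hh
        have hm2 : h'.val (N + m + 1) ∈ P (N + m + 1) := mem_image_of_mem _ hh'
        have hnc2 : (1/2 : ℝ) ∉ P (N + m + 1) := hN _ (by omega)
        have hside : sSup (P (N+m+1)) < 1/2 ∨ 1/2 < sInf (P (N+m+1)) := by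
          by_contra hcon
          push_neg at hcon
          exact hnc2 ((PIcc _) ▸ mem_Icc.mpr ⟨hcon.2, hcon.1⟩)
        have hml1 := (PIcc _) ▸ hm1
        have hml2 := (PIcc _) ▸ hm2
        rw [mem_Icc] at hml1 hml2
        have heqT : T (h.val (N + m + 1)) = T (h'.val (N + m + 1)) := by
          rw [h.2.2 (N + m), h'.2.2 (N + m)]
          exact ihm
        have hdist : |T (h.val (N+m+1)) - T (h'.val (N+m+1))|
            = s * |h.val (N+m+1) - h'.val (N+m+1)| := by
          apply T_dist hs1 hT
          rcases hside with h3 | h3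
          · exact Or.inl ⟨by linarith [hml1.2], by linarith [hml2.2]⟩
          · exact Or.inr ⟨by linarith [hml1.1], by linarith [hml2.1]⟩
        rw [heqT, sub_self, abs_zero] at hdist
        have : |h.val (N+m+1) - h'.val (N+m+1)| = 0 := by
          by_contra hne'
          have h4 : 0 < |h.val (N+m+1) - h'.val (N+m+1)| :=
            lt_of_le_of_ne (abs_nonneg _) (Ne.symm hne')
          nlinarith
        rw [abs_eq_zero, sub_eq_zero] at this
        exact this
    apply Subtype.ext
    funext i
    rcases le_or_gt i N with hi | hi
    · have e : i + (N - i) = N := by omega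
      have e1 := hval h (N - i) i
      have e2 := hval h' (N - i) i
      rw [e] at e1 e2
      rw [e1, e2, hNN]
    · have e : N + (i - N) = i := by omega
      have := aux (i - N)
      rwa [e] at this
  · -- the critical point is in infinitely many projections : H is everything, contradiction
    exfalso
    push_neg at hfin
    -- every projection has diameter at least δ/(2s) for infinitely many indices
    have claim1 : ∀ N, ∃ i, N ≤ i ∧ δ / (2*s) ≤ sSup (P i) - sInf (P i) := by
      intro N
      obtain ⟨i, hiN, hic⟩ := hfin N
      obtain ⟨j0, hj0, hjc0⟩ := hfin (i + 1)
      classical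
      have hQ : ∃ l, i < l ∧ (1/2 : ℝ) ∈ P l := ⟨j0, by omega, hjc0⟩
      obtain ⟨j, ⟨hij, hjc⟩, hmin⟩ :
          ∃ j, (i < j ∧ (1/2 : ℝ) ∈ P j) ∧ ∀ l, l < j → ¬(i < l ∧ (1/2 : ℝ) ∈ P l) :=
        ⟨Nat.find hQ, Nat.find_spec hQ, fun l hl => Nat.find_min hQ hl⟩
      have hbet : ∀ l, i < l → l < j → (1/2 : ℝ) ∉ P l := by
        intro l h1 h2 hcl
        exact absurd ⟨h1, hcl⟩ (hmin l h2)
      obtain ⟨g, hgj⟩ : ∃ g, j = i + g + 1 := ⟨j - i - 1, by omega⟩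
      subst hgj
      set aj := sInf (P (i + g + 1)) with haj
      set bj := sSup (P (i + g + 1)) with hbj
      have hPj : P (i + g + 1) = Icc aj bj := PIcc _
      have hjm := hPj ▸ hjc
      rw [mem_Icc] at hjm
      -- a precritical point in P j
      obtain ⟨x, hxP, hTx⟩ : ∃ x ∈ P (i + g + 1), T^[g+1] x = 1/2 := by
        have h5 : (1/2 : ℝ) ∈ T^[g+1] '' P (i + (g+1)) := by
          rw [← Pim i (g+1)]; exact hic
        obtain ⟨x, hx1, hx2⟩ := h5
        exact ⟨x, by rwa [show i + g + 1 = i + (g+1) from by omega], hx2⟩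
      have hxm := hPj ▸ hxP
      rw [mem_Icc] at hxm
      have hxne : x ≠ 1/2 := by
        intro hcon
        rw [hcon] at hTx
        exact hnc (g+1) (by omega) hTx
      have hfar : δ / s^(g+2) ≤ |x - 1/2| := by
        have := precrit_far hs1 hs2 hT hD1 hDcut hDnot hnc hinf hδ hlong' (g+1) x
          (by omega) hTx hxne
        rwa [show g + 1 + 1 = g + 2 from rfl] at this
      have hdj : δ / s^(g+2) ≤ bj - aj := by
        rcases abs_cases (x - 1/2) with ⟨he, _⟩ | ⟨he, _⟩ <;> rw [he] at hfar <;>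
          linarith [hxm.1, hxm.2, hjm.1, hjm.2]
      -- fold bound at index i + g
      have hfold : s * (bj - aj) / 2 ≤ sSup (P (i+g)) - sInf (P (i+g)) := by
        have hPig : P (i + g) = T '' P (i + g + 1) := by
          have := Pim (i + g) 1
          rwa [Function.iterate_one] at this
        have hup : ∀ v w : ℝ, Icc v w ⊆ P (i + g) → v ≤ w →
            sSup (P (i+g)) - sInf (P (i+g)) ≥ w - v := by
          intro v w hsub hvw
          have h1 := (PIcc (i+g)) ▸ hsub (left_mem_Icc.mpr hvw)
          have h2 := (PIcc (i+g)) ▸ hsub (right_mem_Icc.mpr hvw)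
          rw [mem_Icc] at h1 h2
          linarith [h1.1, h2.2]
        have hright : Icc (s * (1 - bj)) (s/2) ⊆ P (i + g) := by
          have h0 : T '' Icc (1/2) bj ⊆ P (i + g) := by
            rw [hPig]
            exact image_mono (f := T) (by rw [hPj]; exact Icc_subset_Icc hjm.1 le_rfl)
          have h1 : T '' Icc (1/2) bj = Icc (s * (1 - bj)) (s * (1 - 1/2)) :=
            T_image_Icc_right hs1 hT hjm.2 le_rfl
          rw [show s * (1 - (1/2:ℝ)) = s/2 from by ring] at h1
          rw [← h1]
          exact h0
        have hleft : Icc (s * aj) (s/2) ⊆ P (i + g) := by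
          have h0 : T '' Icc aj (1/2) ⊆ P (i + g) := by
            rw [hPig]
            exact image_mono (f := T) (by rw [hPj]; exact Icc_subset_Icc le_rfl hjm.2)
          have h1 : T '' Icc aj (1/2) = Icc (s * aj) (s * (1/2)) :=
            T_image_Icc_left hs1 hT hjm.1 le_rfl
          rw [show s * ((1:ℝ)/2) = s/2 from by ring] at h1
          rw [← h1]
          exact h0
        have h6 := hup _ _ hright (by nlinarith [hjm.2])
        have h7 := hup _ _ hleft (by nlinarith [hjm.1])
        nlinarith
      -- expansion from i to i + g
      have hexp : ∀ t, t ≤ g →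
          s^t * (sSup (P (i+t)) - sInf (P (i+t))) ≤ sSup (P i) - sInf (P i) := by
        intro t ht
        induction t with
        | zero => simp
        | succ m ihm =>
          have hm : m ≤ g := by omega
          have hnc3 : (1/2 : ℝ) ∉ P (i + m + 1) := hbet _ (by omega) (by omega)
          set am := sInf (P (i+m+1)) with ham
          set bm := sSup (P (i+m+1)) with hbm
          have hPm : P (i+m+1) = Icc am bm := PIcc _
          have habm : am ≤ bm := Pab _
          have hstep : sSup (P (i+m)) - sInf (P (i+m)) = s * (bm - am) := by
            have hPim : P (i + m) = T '' P (i + m + 1) := by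
              have := Pim (i + m) 1
              rwa [Function.iterate_one] at this
            have hside : bm < 1/2 ∨ 1/2 < am := by
              by_contra hcon
              push_neg at hcon
              exact hnc3 (hPm ▸ mem_Icc.mpr ⟨hcon.2, hcon.1⟩)
            rcases hside with h3 | h3
            · rw [hPim, hPm, T_image_Icc_left hs1 hT habm h3.le,
                csSup_Icc (by nlinarith), csInf_Icc (by nlinarith)]
              ring
            · rw [hPim, hPm, T_image_Icc_right hs1 hT habm h3.le,
                csSup_Icc (by nlinarith), csInf_Icc (by nlinarith)]
              ring
          calc s^(m+1) * (sSup (P (i+(m+1))) - sInf (P (i+(m+1))))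
              = s^m * (s * (bm - am)) := by
                rw [show i + (m+1) = i + m + 1 from by omega, ← ham, ← hbm, pow_succ]
                ring
          _ = s^m * (sSup (P (i+m)) - sInf (P (i+m))) := by rw [hstep]
          _ ≤ _ := ihm hm
      -- combine
      refine ⟨i, hiN, ?_⟩
      have hA : (0:ℝ) < s^g := pow_pos hs0 g
      have h8 := hexp g le_rfl
      have h9 : s^g * (s * (bj - aj) / 2) ≤ s^g * (sSup (P (i+g)) - sInf (P (i+g))) :=
        mul_le_mul_of_nonneg_left hfold hA.le
      have h10 : δ / s^(g+2) * (s^g * s / 2) ≤ (bj - aj) * (s^g * s / 2) := by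
        apply mul_le_mul_of_nonneg_right hdj
        positivity
      have h11 : δ / s^(g+2) * (s^g * s / 2) = δ / (2*s) := by
        rw [pow_add]
        field_simp
      rw [h11] at h10
      have h12 : (bj - aj) * (s^g * s / 2) = s^g * (s * (bj - aj) / 2) := by ring
      rw [h12] at h10
      linarith
    -- leo : every projection is all of the core
    have hεpos : (0:ℝ) < δ / (2*s) := by positivity
    obtain ⟨M, hM⟩ := leo hs1 hs2 hT hεpos
    have Pall : ∀ i0, P i0 = Icc (s - s^2/2) (s/2) := by
      intro i0
      apply Subset.antisymm (Psub i0)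
      obtain ⟨i, hi, hd⟩ := claim1 (i0 + M)
      set a := sInf (P i) with ha
      set b := sSup (P i) with hb
      have hPi : P i = Icc a b := PIcc i
      have hab : a < b := by
        have := hεpos
        linarith
      have hsub01 : Icc a b ⊆ Icc (0:ℝ) 1 := by
        rw [← hPi]
        exact Subset.trans (Psub i) (K_sub_01 hs1 hs2 hT)
      have hK2 : Icc (s - s^2/2) (s/2) ⊆ T^[i - i0] '' Icc a b :=
        hM a b hab hd hsub01 (i - i0) (by omega)
      have : P i0 = T^[i - i0] '' P i := by
        have := Pim i0 (i - i0)
        rwa [show i0 + (i - i0) = i from by omega] at this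
      rw [this, hPi]
      exact hK2
    -- conclude H = univ
    apply hproper
    apply Subset.antisymm (subset_univ H)
    intro z _
    have hz : ∀ n, ∃ h, h ∈ H ∧ (h : InvLim T K).val n = z.val n := by
      intro n
      have h1 : z.val n ∈ P n := by
        rw [Pall n, ← hKval]
        exact z.2.1 n
      obtain ⟨h, hh, he⟩ := h1
      exact ⟨h, hh, he⟩
    choose u hu hue using hz
    have hconv : Tendsto u atTop (𝓝 z) := by
      rw [tendsto_subtype_rng]
      rw [tendsto_pi_nhds]
      intro l
      apply Tendsto.congr' _ (tendsto_const_nhds (x := z.val l))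
      rw [Filter.EventuallyEq, eventually_atTop]
      refine ⟨l, fun n hn => ?_⟩
      have e : l + (n - l) = n := by omega
      have e1 := hval (u n) (n - l) l
      have e2 := hval z (n - l) l
      rw [e] at e1 e2
      rw [e2, e1, hue n]
    exact hcomp.isClosed.mem_of_tendsto hconv (Eventually.of_forall hu)
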